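/- Let l ≥ 1 and β = (β₁, ..., β_l) ∈ (1, ∞)^l, let c > 0, and suppose that for every nonempty subset J ⊆ {1, ..., l} a measurable function ρ_J: ℝ^J → [0, ∞) is given satisfying ρ_J(δ) ≤ c · min_{i ∈ J} e^{δ_i} for all δ ∈ ℝ^J. For θ = (θ₁, ..., θ_l) ∈ (0, ∞)^l and 1 ≤ k ≤ l define g_k(θ) := Σ_{J ⊆ {1,...,l}, |J| = k} ( Π_{i ∈ J} β_i θ_i ) · ∫_{ℝ^J} exp( Σ_{i ∈ J} ( −θ_i e^{β_i y_i} + β_i y_i ) ) ρ_J(−y) dy, and F(θ) := Σ_{k=1}^l (−1)^{k+1} g_k(θ). Then every g_k(θ) tends to 0, and hence F(θ) tends to 0, as θ → 0 in (0, ∞)^l. -/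

import Mathlib

open MeasureTheory Filter Topology

/-- The quantity `g_k(θ) = Σ_{J ⊆ {1,...,l}, |J| = k} (Π_{i ∈ J} β_i θ_i) ·
∫_{ℝ^J} exp(Σ_{i ∈ J} (-θ_i e^{β_i y_i} + β_i y_i)) ρ_J(-y) dy`. -/
noncomputable def gAux (l : ℕ) (β θ : Fin l → ℝ)
    (ρ : (J : Finset (Fin l)) → ((↥J) → ℝ) → ℝ) (k : ℕ) : ℝ :=
  ∑ J ∈ Finset.univ.powerset.filter (fun J : Finset (Fin l) => J.card = k),
    (∏ i ∈ J, β i * θ i) *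
      ∫ y : (↥J) → ℝ,
        Real.exp (∑ i : ↥J, (-(θ i.1) * Real.exp (β i.1 * y i) + β i.1 * y i)) * ρ J (-y)

/-- The quantity `F(θ) = Σ_{k=1}^l (-1)^{k+1} g_k(θ)`. -/
noncomputable def FAux (l : ℕ) (β θ : Fin l → ℝ)
    (ρ : (J : Finset (Fin l)) → ((↥J) → ℝ) → ℝ) : ℝ :=
  ∑ k ∈ Finset.Icc 1 l, (-1 : ℝ) ^ (k + 1) * gAux l β θ ρ k


open MeasureTheory Filter Topology

lemma onedim_ptwise {θ β ε : ℝ} (y : ℝ) :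
    |Real.exp y| • ((Real.exp y) ^ (β - ε - 1) * Real.exp (-θ * (Real.exp y) ^ β))
      = Real.exp (-θ * Real.exp (β * y) + (β - ε) * y) := by
  rw [abs_of_pos (Real.exp_pos y), smul_eq_mul,
    Real.rpow_def_of_pos (Real.exp_pos y), Real.rpow_def_of_pos (Real.exp_pos y),
    Real.log_exp, ← Real.exp_add, ← Real.exp_add]
  congr 1
  ring_nf

lemma onedim_integrable {θ β ε : ℝ} (hθ : 0 < θ) (hεβ : ε < β) (hβ : 1 ≤ β) :
    Integrable (fun y : ℝ => Real.exp (-θ * Real.exp (β * y) + (β - ε) * y)) := by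
  have h := integrableOn_image_iff_integrableOn_abs_deriv_smul (f := Real.exp)
    (f' := Real.exp) MeasurableSet.univ
    (fun x _ => (Real.hasDerivAt_exp x).hasDerivWithinAt)
    (Real.exp_injective.injOn)
    (fun x => x ^ (β - ε - 1) * Real.exp (-θ * x ^ β))
  rw [Set.image_univ, Real.range_exp] at h
  have h2 : IntegrableOn (fun x : ℝ => x ^ (β - ε - 1) * Real.exp (-θ * x ^ β)) (Set.Ioi 0) :=
    integrableOn_rpow_mul_exp_neg_mul_rpow (by linarith) (by linarith) hθ
  have h3 := h.mp h2
  rw [integrableOn_univ] at h3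
  exact h3.congr (Filter.Eventually.of_forall fun y => onedim_ptwise y)

lemma onedim_eq {θ β ε : ℝ} (hθ : 0 < θ) (hε : 0 < ε) (hεβ : ε < β) :
    ∫ y : ℝ, Real.exp (-θ * Real.exp (β * y) + (β - ε) * y)
      = θ ^ ((ε - β) / β) * (1 / β) * Real.Gamma ((β - ε) / β) := by
  have hβ0 : (0:ℝ) < β := hε.trans hεβ
  have h := integral_image_eq_integral_abs_deriv_smul (f := Real.exp)
    (f' := Real.exp) MeasurableSet.univ
    (fun x _ => (Real.hasDerivAt_exp x).hasDerivWithinAt)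
    (Real.exp_injective.injOn)
    (fun x => x ^ (β - ε - 1) * Real.exp (-θ * x ^ β))
  rw [Set.image_univ, Real.range_exp] at h
  rw [integral_rpow_mul_exp_neg_mul_rpow hβ0 (by linarith) hθ] at h
  simp only [onedim_ptwise] at h
  rw [MeasureTheory.setIntegral_univ] at h
  rw [← h]
  norm_num

lemma factor_eq {θ β ε G : ℝ} (hθ : 0 < θ) (hβ : 0 < β) :
    (β * θ) * (θ ^ ((ε - β) / β) * (1 / β) * G) = G * θ ^ (ε / β) := by
  have h1 : θ * θ ^ ((ε - β) / β) = θ ^ (ε / β) := by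
    rw [show ε / β = 1 + (ε - β) / β by field_simp; ring, Real.rpow_add hθ, Real.rpow_one]
  calc (β * θ) * (θ ^ ((ε - β) / β) * (1 / β) * G)
      = (β * (1/β)) * (θ * θ ^ ((ε - β) / β)) * G := by ring
    _ = G * θ ^ (ε / β) := by rw [mul_one_div_cancel hβ.ne', h1]; ring

section Main

variable {l : ℕ} {β : Fin l → ℝ} {c : ℝ}
  {ρ : (J : Finset (Fin l)) → ((↥J) → ℝ) → ℝ}

/-- bound on ρ by the geometric mean -/
lemma rho_geom (hc : 0 < c)
    (hρnonneg : ∀ J δ, 0 ≤ ρ J δ)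
    (hρbd : ∀ (J : Finset (Fin l)), J.Nonempty → ∀ (δ : (↥J) → ℝ) (i : ↥J),
      ρ J δ ≤ c * Real.exp (δ i))
    (J : Finset (Fin l)) (hJ : J.Nonempty) (δ : (↥J) → ℝ) :
    ρ J δ ≤ c * ∏ i : ↥J, Real.exp (δ i * (J.card : ℝ)⁻¹) := by
  have hk : J.card ≠ 0 := by simpa [Finset.card_eq_zero] using hJ.ne_empty
  have hR : (0:ℝ) ≤ c * ∏ i : ↥J, Real.exp (δ i * (J.card : ℝ)⁻¹) := by
    positivity
  rw [← pow_le_pow_iff_left₀ (hρnonneg J δ) hR hk]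
  have hcard : Fintype.card ↥J = J.card := Fintype.card_coe J
  calc ρ J δ ^ J.card = ∏ _i : ↥J, ρ J δ := by
        rw [Finset.prod_const, Finset.card_univ, hcard]
    _ ≤ ∏ i : ↥J, (c * Real.exp (δ i)) := by
        refine Finset.prod_le_prod (fun i _ => hρnonneg J δ) (fun i _ => hρbd J hJ δ i)
    _ = (c * ∏ i : ↥J, Real.exp (δ i * (J.card : ℝ)⁻¹)) ^ J.card := by
        rw [mul_pow, Finset.prod_mul_distrib, Finset.prod_const, Finset.card_univ, hcard,
          ← Finset.prod_pow]
        congr 1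
        refine Finset.prod_congr rfl (fun i _ => ?_)
        rw [← Real.exp_nat_mul]
        congr 1
        field_simp
    
lemma term_le (hβ : ∀ i, 1 < β i) (hc : 0 < c)
    (hρnonneg : ∀ J δ, 0 ≤ ρ J δ)
    (hρbd : ∀ (J : Finset (Fin l)), J.Nonempty → ∀ (δ : (↥J) → ℝ) (i : ↥J),
      ρ J δ ≤ c * Real.exp (δ i))
    (θ : Fin l → ℝ) (hθ : ∀ i, 0 < θ i)
    (J : Finset (Fin l)) (hJ : J.Nonempty) :
    (∏ i ∈ J, β i * θ i) *
      ∫ y : (↥J) → ℝ,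
        Real.exp (∑ i : ↥J, (-(θ i.1) * Real.exp (β i.1 * y i) + β i.1 * y i)) * ρ J (-y)
    ≤ c * ∏ i ∈ J, (Real.Gamma ((β i - (J.card : ℝ)⁻¹) / β i)
        * θ i ^ ((J.card : ℝ)⁻¹ / β i)) := by
  set ε : ℝ := (J.card : ℝ)⁻¹ with hεdef
  have hkpos : 0 < J.card := Finset.card_pos.mpr hJ
  have hε : 0 < ε := by positivity
  have hε1 : ε ≤ 1 := by
    rw [hεdef]
    apply inv_le_one_of_one_le₀
    exact_mod_cast hkpos
  have hεβ : ∀ i : Fin l, ε < β i := fun i => lt_of_le_of_lt hε1 (hβ i)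
  -- the dominating function
  set f : ↥J → ℝ → ℝ := fun i y => Real.exp (-(θ i.1) * Real.exp (β i.1 * y) + (β i.1 - ε) * y)
    with hfdef
  have hfint : ∀ i : ↥J, Integrable (f i) := fun i =>
    onedim_integrable (hθ i.1) (hεβ i.1) (hβ i.1).le
  have hint : Integrable (fun y : (↥J) → ℝ => c * ∏ i : ↥J, f i (y i)) :=
    (Integrable.fintype_prod hfint).const_mul c
  have hmono : ∫ y : (↥J) → ℝ,
        Real.exp (∑ i : ↥J, (-(θ i.1) * Real.exp (β i.1 * y i) + β i.1 * y i)) * ρ J (-y)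
      ≤ ∫ y : (↥J) → ℝ, c * ∏ i : ↥J, f i (y i) := by
    refine integral_mono_of_nonneg (Filter.Eventually.of_forall fun y => ?_) hint
      (Filter.Eventually.of_forall fun y => ?_)
    · exact mul_nonneg (Real.exp_pos _).le (hρnonneg J _)
    · have h1 : ρ J (-y) ≤ c * ∏ i : ↥J, Real.exp (-(y i) * ε) := by
        simpa using rho_geom hc hρnonneg hρbd J hJ (-y)
      calc Real.exp (∑ i : ↥J, (-(θ i.1) * Real.exp (β i.1 * y i) + β i.1 * y i)) * ρ J (-y)
          ≤ Real.exp (∑ i : ↥J, (-(θ i.1) * Real.exp (β i.1 * y i) + β i.1 * y i)) *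
            (c * ∏ i : ↥J, Real.exp (-(y i) * ε)) :=
            mul_le_mul_of_nonneg_left h1 (Real.exp_pos _).le
        _ = c * ∏ i : ↥J, f i (y i) := by
            rw [mul_left_comm, Real.exp_sum, ← Finset.prod_mul_distrib]
            congr 1
            refine Finset.prod_congr rfl (fun i _ => ?_)
            rw [hfdef, ← Real.exp_add]
            congr 1
            ring
  have hP : (0:ℝ) ≤ ∏ i ∈ J, β i * θ i :=
    Finset.prod_nonneg fun i _ => mul_nonneg (by linarith [hβ i]) (hθ i).le
  calc (∏ i ∈ J, β i * θ i) * ∫ y : (↥J) → ℝ,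
        Real.exp (∑ i : ↥J, (-(θ i.1) * Real.exp (β i.1 * y i) + β i.1 * y i)) * ρ J (-y)
      ≤ (∏ i ∈ J, β i * θ i) * ∫ y : (↥J) → ℝ, c * ∏ i : ↥J, f i (y i) :=
        mul_le_mul_of_nonneg_left hmono hP
    _ = c * ∏ i ∈ J, (Real.Gamma ((β i - ε) / β i) * θ i ^ (ε / β i)) := by
        rw [MeasureTheory.integral_const_mul, MeasureTheory.integral_fintype_prod_volume_eq_prod]
        have heval : ∀ i : ↥J, ∫ y : ℝ, f i y =
            θ i.1 ^ ((ε - β i.1) / β i.1) * (1 / β i.1) * Real.Gamma ((β i.1 - ε) / β i.1) :=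
          fun i => onedim_eq (hθ i.1) hε (hεβ i.1)
        simp_rw [heval]
        rw [show (∏ i : ↥J, θ i.1 ^ ((ε - β i.1) / β i.1) * (1 / β i.1)
              * Real.Gamma ((β i.1 - ε) / β i.1)) =
            ∏ i ∈ J, θ i ^ ((ε - β i) / β i) * (1 / β i) * Real.Gamma ((β i - ε) / β i) from by
          rw [← Finset.prod_attach J
            (fun i => θ i ^ ((ε - β i) / β i) * (1 / β i) * Real.Gamma ((β i - ε) / β i))]
          rfl]
        rw [mul_left_comm, ← Finset.prod_mul_distrib]
        congr 1
        refine Finset.prod_congr rfl (fun i hi => ?_)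
        exact factor_eq (hθ i) (lt_trans one_pos (hβ i))

end Main


section Final

variable {l : ℕ} {β : Fin l → ℝ} {c : ℝ}
  {ρ : (J : Finset (Fin l)) → ((↥J) → ℝ) → ℝ}

noncomputable def Bnd (l : ℕ) (β : Fin l → ℝ) (c : ℝ) (k : ℕ) (θ : Fin l → ℝ) : ℝ :=
  ∑ J ∈ Finset.univ.powerset.filter (fun J : Finset (Fin l) => J.card = k),
    c * ∏ i ∈ J, (Real.Gamma ((β i - (k : ℝ)⁻¹) / β i) * θ i ^ ((k : ℝ)⁻¹ / β i))

lemma tendsto_Bnd (hβ : ∀ i, 1 < β i) (k : ℕ) (hk : 1 ≤ k) :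
    Tendsto (fun θ : Fin l → ℝ => Bnd l β c k θ) (𝓝 0) (𝓝 0) := by
  have hp : ∀ i : Fin l, 0 < (k : ℝ)⁻¹ / β i := fun i => by
    have : (0:ℝ) < (k:ℝ) := by exact_mod_cast hk
    have := hβ i
    positivity
  have hterm : ∀ J ∈ Finset.univ.powerset.filter (fun J : Finset (Fin l) => J.card = k),
      Tendsto (fun θ : Fin l → ℝ =>
          c * ∏ i ∈ J, (Real.Gamma ((β i - (k : ℝ)⁻¹) / β i) * θ i ^ ((k : ℝ)⁻¹ / β i)))
        (𝓝 0) (𝓝 0) := by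
    intro J hJ
    have hJcard : J.card = k := (Finset.mem_filter.mp hJ).2
    have hJne : J.Nonempty := Finset.card_pos.mp (by omega)
    have hprod : Tendsto (fun θ : Fin l → ℝ =>
        ∏ i ∈ J, (Real.Gamma ((β i - (k : ℝ)⁻¹) / β i) * θ i ^ ((k : ℝ)⁻¹ / β i)))
        (𝓝 0) (𝓝 (∏ i ∈ J,
          (Real.Gamma ((β i - (k : ℝ)⁻¹) / β i) * (0:ℝ) ^ ((k : ℝ)⁻¹ / β i)))) := by
      refine tendsto_finset_prod _ (fun i _ => ?_)
      have h1 : Tendsto (fun x : ℝ => x ^ ((k : ℝ)⁻¹ / β i)) (𝓝 0)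
          (𝓝 ((0:ℝ) ^ ((k : ℝ)⁻¹ / β i))) :=
        Real.continuousAt_rpow_const 0 _ (Or.inr (hp i).le)
      have h2 : Tendsto (fun θ : Fin l → ℝ => θ i) (𝓝 0) (𝓝 0) := by
        simpa using (continuous_apply (A := fun _ : Fin l => ℝ) i).tendsto 0
      exact (h1.comp h2).const_mul _
    have hzero : (∏ i ∈ J,
        (Real.Gamma ((β i - (k : ℝ)⁻¹) / β i) * (0:ℝ) ^ ((k : ℝ)⁻¹ / β i))) = 0 := by
      obtain ⟨i, hi⟩ := hJne
      refine Finset.prod_eq_zero hi ?_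
      rw [Real.zero_rpow (hp i).ne', mul_zero]
    rw [hzero] at hprod
    simpa using hprod.const_mul c
  have := tendsto_finset_sum _ hterm
  simpa [Bnd] using this

lemma gAux_nonneg (hβ : ∀ i, 1 < β i)
    (hρnonneg : ∀ J δ, 0 ≤ ρ J δ)
    (θ : Fin l → ℝ) (hθ : ∀ i, 0 < θ i) (k : ℕ) :
    0 ≤ gAux l β θ ρ k := by
  refine Finset.sum_nonneg (fun J _ => mul_nonneg ?_ ?_)
  · exact Finset.prod_nonneg fun i _ => mul_nonneg (by linarith [hβ i]) (hθ i).le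
  · exact integral_nonneg fun y => mul_nonneg (Real.exp_pos _).le (hρnonneg J _)

lemma gAux_le (hβ : ∀ i, 1 < β i) (hc : 0 < c)
    (hρnonneg : ∀ J δ, 0 ≤ ρ J δ)
    (hρbd : ∀ (J : Finset (Fin l)), J.Nonempty → ∀ (δ : (↥J) → ℝ) (i : ↥J),
      ρ J δ ≤ c * Real.exp (δ i))
    (θ : Fin l → ℝ) (hθ : ∀ i, 0 < θ i) (k : ℕ) (hk : 1 ≤ k) :
    gAux l β θ ρ k ≤ Bnd l β c k θ := by
  refine Finset.sum_le_sum (fun J hJ => ?_)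
  have hJcard : J.card = k := (Finset.mem_filter.mp hJ).2
  have hJne : J.Nonempty := Finset.card_pos.mp (by omega)
  have h := term_le hβ hc hρnonneg hρbd θ hθ J hJne
  rwa [hJcard] at h

end Final

/-- under the bound `ρ_J(δ) ≤ c min_{i∈J} e^{δ_i}`, every `g_k(θ)` tends to `0`,
and hence `F(θ)` tends to `0`, as `θ → 0` within `(0, ∞)^l`. -/
theorem stmt7 (l : ℕ) (hl : 1 ≤ l) (β : Fin l → ℝ) (hβ : ∀ i, 1 < β i)
    (c : ℝ) (hc : 0 < c)
    (ρ : (J : Finset (Fin l)) → ((↥J) → ℝ) → ℝ)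
    (hρmeas : ∀ J, Measurable (ρ J))
    (hρnonneg : ∀ J δ, 0 ≤ ρ J δ)
    (hρbd : ∀ (J : Finset (Fin l)), J.Nonempty → ∀ (δ : (↥J) → ℝ) (i : ↥J),
      ρ J δ ≤ c * Real.exp (δ i)) :
    (∀ k : ℕ, 1 ≤ k → k ≤ l →
      Tendsto (fun θ : Fin l → ℝ => gAux l β θ ρ k)
        (𝓝[{θ : Fin l → ℝ | ∀ i, 0 < θ i}] 0) (𝓝 0)) ∧
    Tendsto (fun θ : Fin l → ℝ => FAux l β θ ρ)
      (𝓝[{θ : Fin l → ℝ | ∀ i, 0 < θ i}] 0) (𝓝 0) := by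
  have hg : ∀ k : ℕ, 1 ≤ k → k ≤ l →
      Tendsto (fun θ : Fin l → ℝ => gAux l β θ ρ k)
        (𝓝[{θ : Fin l → ℝ | ∀ i, 0 < θ i}] 0) (𝓝 0) := by
    intro k hk1 _
    refine squeeze_zero'
      (eventually_nhdsWithin_of_forall fun θ hθ => gAux_nonneg hβ hρnonneg θ hθ k)
      (eventually_nhdsWithin_of_forall fun θ hθ => gAux_le hβ hc hρnonneg hρbd θ hθ k hk1)
      ((tendsto_Bnd hβ k hk1).mono_left nhdsWithin_le_nhds)
  refine ⟨hg, ?_⟩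
  have hsum : Tendsto (fun θ : Fin l → ℝ =>
      ∑ k ∈ Finset.Icc 1 l, (-1 : ℝ) ^ (k + 1) * gAux l β θ ρ k)
      (𝓝[{θ : Fin l → ℝ | ∀ i, 0 < θ i}] 0) (𝓝 (∑ k ∈ Finset.Icc 1 l, (0:ℝ))) := by
    refine tendsto_finset_sum _ (fun k hk => ?_)
    obtain ⟨h1, h2⟩ := Finset.mem_Icc.mp hk
    simpa using (hg k h1 h2).const_mul ((-1 : ℝ) ^ (k + 1))
  simpa [FAux] using hsum
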